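/- Let θ ∈ ℝ^{d×n}, b ∈ ℝ^n, and define F : ℝ^d → ℝ^d by F(c) = θ(I + θᵀθ)⁻¹(θᵀc + b). If the stored data point s ∈ ℝ^d satisfies s = θb (zero-energy storage), then F(s) = s, and for every c ∈ ℝ^d the iterates F^m(c) converge to s as m → ∞; in particular s is an attractor of the retrieval dynamics whose basin is all of ℝ^d. -/

import Mathlib

open Matrix

/-- For `θ ∈ ℝ^{d×n}`, `b ∈ ℝ^n`, and the retrieval map
`F(c) = θ(I + θᵀθ)⁻¹(θᵀc + b)`, if the stored data point `s ∈ ℝ^d` satisfies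
`s = θb` (zero-energy storage), then `F(s) = s`, and for every `c ∈ ℝ^d` the
iterates `F^m(c)` converge to `s` as `m → ∞`; in particular `s` is an attractor of
the retrieval dynamics whose basin is all of `ℝ^d`. -/
theorem pcn_retrieval_map_attractor
    (d m : ℕ) (θ : Matrix (Fin d) (Fin m) ℝ) (b : Fin m → ℝ) (s : Fin d → ℝ)
    (F : (Fin d → ℝ) → (Fin d → ℝ))
    (hF : ∀ c : Fin d → ℝ, F c = θ.mulVec ((1 + θᵀ * θ)⁻¹.mulVec (θᵀ.mulVec c + b)))
    (hs : s = θ.mulVec b) :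
    F s = s
    ∧ (∀ c : Fin d → ℝ, Filter.Tendsto (fun k : ℕ => F^[k] c) Filter.atTop (nhds s)) := by
  classical
  set M : Matrix (Fin m) (Fin m) ℝ := 1 + θᵀ * θ with hMdef
  have htt : θᴴ = θᵀ := Matrix.conjTranspose_eq_transpose_of_trivial θ
  have hMpos : M.PosDef := by
    have h1 : (θᵀ * θ).PosSemidef := by
      simpa [htt] using Matrix.posSemidef_conjTranspose_mul_self θ
    exact Matrix.PosDef.add_posSemidef Matrix.PosDef.one h1
  have hMdet : IsUnit M.det := (Matrix.isUnit_iff_isUnit_det _).1 hMpos.isUnit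
  have hMMinv : M * M⁻¹ = 1 := Matrix.mul_nonsing_inv _ hMdet
  have hMinvM : M⁻¹ * M = 1 := Matrix.nonsing_inv_mul _ hMdet
  set A : Matrix (Fin d) (Fin d) ℝ := θ * M⁻¹ * θᵀ with hAdef
  -- F as an affine map
  have hFaff : ∀ x : Fin d → ℝ, F x = A *ᵥ x + θ *ᵥ (M⁻¹ *ᵥ b) := by
    intro x
    rw [hF x]
    rw [Matrix.mulVec_add, Matrix.mulVec_add, Matrix.mulVec_mulVec, Matrix.mulVec_mulVec,
      Matrix.mulVec_mulVec]
  -- fixed point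
  have hFs : F s = s := by
    rw [hF s, hs]
    have h1 : θᵀ *ᵥ (θ *ᵥ b) + b = M *ᵥ b := by
      rw [hMdef, Matrix.add_mulVec, Matrix.one_mulVec, Matrix.mulVec_mulVec]
      exact (add_comm _ _)
    rw [h1, Matrix.mulVec_mulVec, Matrix.mulVec_mulVec, Matrix.mul_assoc, hMinvM,
      Matrix.mul_one]
  -- one step contraction identity
  have hstep : ∀ x : Fin d → ℝ, F x = s + A *ᵥ (x - s) := by
    intro x
    have hx := hFaff x
    have hsx := hFaff s
    rw [hFs] at hsx
    rw [hx, Matrix.mulVec_sub]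
    nth_rewrite 1 [hsx]
    abel
  -- iterates
  have hiter : ∀ (k : ℕ) (c : Fin d → ℝ), F^[k] c = s + (A ^ k) *ᵥ (c - s) := by
    intro k
    induction k with
    | zero => intro c; simp
    | succ k ih =>
      intro c
      rw [Function.iterate_succ_apply', ih c, hstep]
      congr 1
      rw [add_sub_cancel_left, Matrix.mulVec_mulVec, ← pow_succ']
  -- A is positive semidefinite
  have hApsd : A.PosSemidef := by
    have := (hMpos.inv.posSemidef).mul_mul_conjTranspose_same θ
    rwa [htt] at this
  have hAh : A.IsHermitian := hApsd.1
  -- 1 - A is positive definite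
  set N : Matrix (Fin d) (Fin d) ℝ := 1 + θ * θᵀ with hNdef
  have hNpos : N.PosDef := by
    have h1 : (θ * θᵀ).PosSemidef := by
      simpa [htt] using Matrix.posSemidef_self_mul_conjTranspose θ
    exact Matrix.PosDef.add_posSemidef Matrix.PosDef.one h1
  have hNA : N * A = θ * θᵀ := by
    have expand : N * A = θ * ((1 + θᵀ * θ) * M⁻¹) * θᵀ := by
      rw [hNdef, hAdef]
      simp only [Matrix.add_mul, Matrix.mul_add, Matrix.one_mul, Matrix.mul_one,
        Matrix.mul_assoc]
    rw [expand, ← hMdef, hMMinv, Matrix.mul_one]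
  have hNright : N * (1 - A) = 1 := by
    rw [Matrix.mul_sub, Matrix.mul_one, hNA, hNdef]
    abel
  have hOneSubA : (1 - A) = N⁻¹ := (Matrix.inv_eq_right_inv hNright).symm
  have hOneSubApos : (1 - A).PosDef := hOneSubA ▸ hNpos.inv
  -- eigenvalue bounds
  have hev_nonneg : ∀ i, 0 ≤ hAh.eigenvalues i := fun i => hApsd.eigenvalues_nonneg i
  have hev_lt_one : ∀ i, hAh.eigenvalues i < 1 := by
    intro i
    set v : Fin d → ℝ := ⇑(hAh.eigenvectorBasis i) with hv
    have hv0 : v ≠ 0 := by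
      intro h
      exact hAh.eigenvectorBasis.orthonormal.ne_zero i (by ext j; exact congrFun h j)
    have hvv : 0 < v ⬝ᵥ v := by
      have := (Matrix.PosDef.one (n := Fin d) (R := ℝ)).dotProduct_mulVec_pos hv0
      simpa using this
    have hpos := hOneSubApos.dotProduct_mulVec_pos hv0
    have hAv : A *ᵥ v = hAh.eigenvalues i • v := hAh.mulVec_eigenvectorBasis i
    rw [Matrix.sub_mulVec, Matrix.one_mulVec, hAv] at hpos
    have hdot : v ⬝ᵥ (v - hAh.eigenvalues i • v) = (1 - hAh.eigenvalues i) * (v ⬝ᵥ v) := by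
      rw [_root_.dotProduct_sub, _root_.dotProduct_smul, smul_eq_mul]
      ring
    rw [star_trivial, hdot] at hpos
    nlinarith
  -- spectral decomposition and powers
  set U : Matrix (Fin d) (Fin d) ℝ := (Matrix.IsHermitian.eigenvectorUnitary hAh : Matrix (Fin d) (Fin d) ℝ) with hU
  set D : Matrix (Fin d) (Fin d) ℝ := Matrix.diagonal (RCLike.ofReal ∘ hAh.eigenvalues) with hD
  have hspec : A = U * D * star U := hAh.spectral_theorem
  have hUstar : star U * U = 1 := by simp [hU]
  have hUstar' : U * star U = 1 := by simp [hU]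
  have hpow : ∀ k : ℕ, A ^ k = U * D ^ k * star U := by
    intro k
    induction k with
    | zero => simpa using hUstar'.symm
    | succ k ih =>
      have hcancel : ∀ X : Matrix (Fin d) (Fin d) ℝ, star U * (U * X) = X := by
        intro X; rw [← Matrix.mul_assoc, hUstar, Matrix.one_mul]
      rw [pow_succ, ih, hspec, pow_succ]
      simp only [Matrix.mul_assoc, hcancel]
  -- D ^ k → 0
  have hDlim : Filter.Tendsto (fun k : ℕ => D ^ k) Filter.atTop (nhds 0) := by
    refine tendsto_pi_nhds.2 ?_
    intro i
    rw [tendsto_pi_nhds]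
    intro j
    have hDk : ∀ k : ℕ, (D ^ k) i j = if i = j then (hAh.eigenvalues i) ^ k else 0 := by
      intro k
      rw [hD, Matrix.diagonal_pow, Matrix.diagonal_apply]
      simp [Pi.pow_apply]
    simp only [hDk]
    by_cases hij : i = j
    · simp only [hij, if_true]
      have : |hAh.eigenvalues j| < 1 := by
        rw [abs_lt]
        constructor
        · linarith [hev_nonneg j]
        · exact hev_lt_one j
      simpa using tendsto_pow_atTop_nhds_zero_of_abs_lt_one this
    · simp only [hij, if_false]
      simp
  -- A ^ k → 0
  have hAlim : Filter.Tendsto (fun k : ℕ => A ^ k) Filter.atTop (nhds 0) := by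
    have hcont : Continuous fun X : Matrix (Fin d) (Fin d) ℝ => U * X * star U :=
      (continuous_const.matrix_mul continuous_id).matrix_mul continuous_const
    have := (hcont.tendsto 0).comp hDlim
    simp only [Function.comp_def, ← hpow] at this
    simpa using this
  refine ⟨hFs, fun c => ?_⟩
  have hcont2 : Continuous fun X : Matrix (Fin d) (Fin d) ℝ => s + X *ᵥ (c - s) :=
    continuous_const.add (continuous_id.matrix_mulVec continuous_const)
  have hlim := (hcont2.tendsto 0).comp hAlim
  simp only [Function.comp_def] at hlim
  have heq : (fun k : ℕ => s + (A ^ k) *ᵥ (c - s)) = fun k : ℕ => F^[k] c := by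
    funext k; rw [hiter k c]
  rw [heq] at hlim
  simpa using hlim
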